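/- Let 1 < α < 2 and n ≥ 1. Then ∑_{k=0}^{n} g_k^α ≤ 1/(n^α · Γ(1-α)) < 0, and moreover ∑_{k=0}^{n} g_k^α = −∑_{k=n+1}^{∞} g_k^α, where the tail series converges. (Note that Γ(1-α) < 0 for 1 < α < 2.) -/

import Mathlib

/-- Grünwald–Letnikov coefficient `g_k^α = (-1)^k * binom(α,k)`. -/
noncomputable def gl (a : ℝ) (k : ℕ) : ℝ :=
  (-1 : ℝ) ^ k * (∏ j ∈ Finset.range k, (a - j)) / (Nat.factorial k : ℝ)

/-- Shifted Grünwald weights. -/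
noncomputable def glw (a : ℝ) : ℕ → ℝ
  | 0 => a / 2 * gl a 0
  | (k+1) => a / 2 * gl a (k+1) + (2 - a) / 2 * gl a k

/-- Second-order Lubich coefficients `l_m^{2,γ}`. -/
noncomputable def lub2 (g : ℝ) (m : ℕ) : ℝ :=
  (3/2 : ℝ) ^ g * ∑ k ∈ Finset.range (m+1), (1/3 : ℝ) ^ k * gl g k * gl g (m - k)

/-- The Toeplitz matrix `B_α` of size `(M-1) × (M-1)`. -/
noncomputable def Bmat (a : ℝ) (M : ℕ) : Matrix (Fin (M-1)) (Fin (M-1)) ℝ :=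
  fun i j => if (j : ℕ) ≤ (i : ℕ) + 1 then glw a ((i : ℕ) + 1 - (j : ℕ)) else 0

/-- The symmetric matrix `A_α = B_α + B_αᵀ`. -/
noncomputable def Amat (a : ℝ) (M : ℕ) : Matrix (Fin (M-1)) (Fin (M-1)) ℝ :=
  Bmat a M + (Bmat a M).transpose

lemma factorial_ne (k : ℕ) : ((Nat.factorial k : ℝ)) ≠ 0 := by
  exact_mod_cast (Nat.factorial_pos k).ne'

lemma gl_succ (a : ℝ) (k : ℕ) : gl a (k+1) = ((k : ℝ) - a) / ((k : ℝ) + 1) * gl a k := by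
  unfold gl
  rw [Finset.prod_range_succ, Nat.factorial_succ]
  have h1 := factorial_ne k
  have h2 : ((k:ℝ)+1) ≠ 0 := by positivity
  push_cast
  field_simp
  ring

lemma prod_shift (a : ℝ) (k : ℕ) :
    ∏ j ∈ Finset.range (k+1), (a - (j:ℝ)) = a * ∏ j ∈ Finset.range k, (a - 1 - (j:ℝ)) := by
  rw [Finset.prod_range_succ']
  have h : ∀ j ∈ Finset.range k, a - ((j+1 : ℕ):ℝ) = a - 1 - (j:ℝ) := by
    intro j _; push_cast; ring
  rw [Finset.prod_congr rfl h]
  simp [mul_comm]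

lemma gl_pascal (a : ℝ) (k : ℕ) :
    gl a (k+1) = gl (a-1) (k+1) - gl (a-1) k := by
  unfold gl
  rw [prod_shift, Finset.prod_range_succ, Nat.factorial_succ]
  have h1 := factorial_ne k
  have h2 : ((k:ℝ)+1) ≠ 0 := by positivity
  push_cast
  field_simp
  ring

lemma sum_gl (a : ℝ) (n : ℕ) : ∑ k ∈ Finset.range (n+1), gl a k = gl (a-1) n := by
  induction n with
  | zero => simp [gl]
  | succ m ih => rw [Finset.sum_range_succ, ih, gl_pascal]; ring

lemma gl_eq (α : ℝ) (m : ℕ) :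
    gl (α - 1) m = (∏ j ∈ Finset.range m, ((j:ℝ) + 1 - α)) / (Nat.factorial m : ℝ) := by
  unfold gl
  rw [show (∏ j ∈ Finset.range m, ((j:ℝ) + 1 - α))
      = ∏ j ∈ Finset.range m, (-1) * (α - 1 - (j:ℝ)) from
    Finset.prod_congr rfl (fun j _ => by ring),
    Finset.prod_mul_distrib, Finset.prod_const, Finset.card_range]

lemma Gamma_prod (α : ℝ) (hα1 : 1 < α) (hα2 : α < 2) (m : ℕ) :
    Real.Gamma ((m:ℝ) + 1 - α)
      = (∏ j ∈ Finset.range m, ((j:ℝ) + 1 - α)) * Real.Gamma (1 - α) := by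
  induction m with
  | zero => simp
  | succ m ih =>
    have hne : (m:ℝ) + 1 - α ≠ 0 := by
      rcases Nat.eq_zero_or_pos m with h | h
      · subst h; push_cast; intro hc; linarith
      · have h1 : (1:ℝ) ≤ m := by exact_mod_cast h
        intro hc; linarith
    have he : ((m+1 : ℕ):ℝ) + 1 - α = ((m:ℝ) + 1 - α) + 1 := by push_cast; ring
    rw [he, Real.Gamma_add_one hne, ih, Finset.prod_range_succ]
    ring

theorem stmt2 (α : ℝ) (hα1 : 1 < α) (hα2 : α < 2) (n : ℕ) (hn : 1 ≤ n) :
    (∑ k ∈ Finset.range (n+1), gl α k) ≤ 1 / ((n : ℝ) ^ α * Real.Gamma (1 - α)) ∧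
    1 / ((n : ℝ) ^ α * Real.Gamma (1 - α)) < 0 ∧
    HasSum (fun j : ℕ => gl α (n + 1 + j)) (-(∑ k ∈ Finset.range (n+1), gl α k)) := by
  have hn1 : (1:ℝ) ≤ n := by exact_mod_cast hn
  have hnpos : (0:ℝ) < n := by linarith
  set G := Real.Gamma (1 - α) with hGdef
  -- Gamma (1-α) < 0
  have hG2 : 0 < Real.Gamma (2 - α) := Real.Gamma_pos_of_pos (by linarith)
  have hGeq : Real.Gamma (2 - α) = (1 - α) * G := by
    rw [show (2:ℝ) - α = (1 - α) + 1 by ring,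
      Real.Gamma_add_one (by intro h; linarith : (1:ℝ) - α ≠ 0), hGdef]
  have hGneg : G < 0 := by
    by_contra h
    push_neg at h
    have : (1 - α) * G ≤ 0 := mul_nonpos_of_nonpos_of_nonneg (by linarith) h
    linarith
  have hNpos : (0:ℝ) < (n:ℝ) ^ α := Real.rpow_pos_of_pos hnpos α
  -- second bullet
  have hbul2 : 1 / ((n : ℝ) ^ α * G) < 0 := by
    apply div_neg_of_pos_of_neg one_pos
    exact mul_neg_of_pos_of_neg hNpos hGneg
  -- Gautschi inequality
  set x : ℝ := (n:ℝ) + 1 - α with hxdef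
  have hx : 0 < x := by rw [hxdef]; linarith
  have hGx : 0 < Real.Gamma x := Real.Gamma_pos_of_pos hx
  have hconv := Real.Gamma_mul_add_mul_le_rpow_Gamma_mul_rpow_Gamma
      (s := x) (t := x + 1) (a := 2 - α) (b := α - 1)
      hx (by linarith) (by linarith) (by linarith) (by ring)
  have hcomb : (2 - α) * x + (α - 1) * (x + 1) = (n:ℝ) := by rw [hxdef]; ring
  rw [hcomb] at hconv
  have hx1 : Real.Gamma (x + 1) = x * Real.Gamma x := Real.Gamma_add_one (ne_of_gt hx)
  have hmul : Real.Gamma x ^ (2-α) * Real.Gamma (x+1) ^ (α-1)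
      = Real.Gamma x * x ^ (α-1) := by
    rw [hx1, Real.mul_rpow hx.le hGx.le,
      show Real.Gamma x ^ (2-α) * (x ^ (α-1) * Real.Gamma x ^ (α-1))
        = (Real.Gamma x ^ (2-α) * Real.Gamma x ^ (α-1)) * x ^ (α-1) by ring,
      ← Real.rpow_add hGx, show (2-α)+(α-1) = (1:ℝ) by ring, Real.rpow_one]
  rw [hmul] at hconv
  have hxn : x ^ (α-1) ≤ (n:ℝ) ^ (α-1) :=
    Real.rpow_le_rpow hx.le (by rw [hxdef]; linarith) (by linarith)
  have hGn : Real.Gamma (n:ℝ) ≤ Real.Gamma x * (n:ℝ) ^ (α-1) := by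
    calc Real.Gamma (n:ℝ) ≤ Real.Gamma x * x ^ (α-1) := hconv
    _ ≤ Real.Gamma x * (n:ℝ) ^ (α-1) := by
        exact mul_le_mul_of_nonneg_left hxn hGx.le
  have hpow : (n:ℝ) * (n:ℝ) ^ (α - 1) = (n:ℝ) ^ α := by
    rw [Real.rpow_sub hnpos, Real.rpow_one]
    field_simp
  have hfac : Real.Gamma ((n:ℝ) + 1) = (Nat.factorial n : ℝ) := by
    exact_mod_cast Real.Gamma_nat_eq_factorial n
  have hGnn : (0:ℝ) < Real.Gamma (n:ℝ) := Real.Gamma_pos_of_pos hnpos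
  have key : (Nat.factorial n : ℝ) ≤ Real.Gamma x * (n:ℝ) ^ α := by
    have h1 : Real.Gamma ((n:ℝ) + 1) = (n:ℝ) * Real.Gamma (n:ℝ) :=
      Real.Gamma_add_one (ne_of_gt hnpos)
    calc (Nat.factorial n : ℝ) = (n:ℝ) * Real.Gamma (n:ℝ) := by rw [← hfac, h1]
    _ ≤ (n:ℝ) * (Real.Gamma x * (n:ℝ) ^ (α-1)) := by
        exact mul_le_mul_of_nonneg_left hGn hnpos.le
    _ = Real.Gamma x * ((n:ℝ) * (n:ℝ) ^ (α-1)) := by ring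
    _ = Real.Gamma x * (n:ℝ) ^ α := by rw [hpow]
  -- sum formula
  have hsumf : ∑ k ∈ Finset.range (n+1), gl α k
      = Real.Gamma x / (G * (Nat.factorial n : ℝ)) := by
    rw [sum_gl, gl_eq, hxdef, Gamma_prod α hα1 hα2 n]
    rw [eq_div_iff (by exact mul_ne_zero (ne_of_lt hGneg) (factorial_ne n))]
    field_simp [factorial_ne n]
    rw [← hGdef]
  -- first bullet
  have hbul1 : ∑ k ∈ Finset.range (n+1), gl α k ≤ 1 / ((n : ℝ) ^ α * G) := by
    rw [hsumf]
    have hF : (0:ℝ) < (Nat.factorial n : ℝ) := by exact_mod_cast Nat.factorial_pos n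
    have hD : G * (Nat.factorial n : ℝ) * (n:ℝ)^α < 0 := by
      apply mul_neg_of_neg_of_pos _ hNpos
      exact mul_neg_of_neg_of_pos hGneg hF
    have e1 : Real.Gamma x / (G * (Nat.factorial n : ℝ))
        = (Real.Gamma x * (n:ℝ)^α) / (G * (Nat.factorial n : ℝ) * (n:ℝ)^α) := by
      rw [mul_div_mul_right _ _ (ne_of_gt hNpos)]
    have e2 : 1 / ((n : ℝ) ^ α * G)
        = (Nat.factorial n : ℝ) / (G * (Nat.factorial n : ℝ) * (n:ℝ)^α) := by
      rw [div_eq_div_iff (by exact mul_ne_zero (ne_of_gt hNpos) (ne_of_lt hGneg))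
        (ne_of_lt hD)]
      ring
    rw [e1, e2, div_le_div_right_of_neg hD]
    exact key
  refine ⟨hbul1, hbul2, ?_⟩
  -- positivity of gl α k for k ≥ 2
  have glpos : ∀ k, 2 ≤ k → 0 < gl α k := by
    intro k hk
    induction k, hk using Nat.le_induction with
    | base =>
      have h2 : gl α 2 = α * (α - 1) / 2 := by
        unfold gl
        rw [Finset.prod_range_succ, Finset.prod_range_succ, Finset.prod_range_zero]
        norm_num [Nat.factorial]
      rw [h2]
      nlinarith [mul_pos (show (0:ℝ) < α by linarith) (show (0:ℝ) < α - 1 by linarith)]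
    | succ k hk ih =>
      rw [gl_succ]
      have hk' : (2:ℝ) ≤ k := by exact_mod_cast hk
      exact mul_pos (div_pos (by linarith) (by linarith)) ih
  -- sign and bound for gl (α-1) m
  have hSb : ∀ m, 1 ≤ m → gl (α-1) m ≤ 0 ∧ -(α-1) ≤ (m:ℝ) * gl (α-1) m := by
    intro m hm
    induction m, hm using Nat.le_induction with
    | base =>
      have h1 : gl (α-1) 1 = 1 - α := by
        unfold gl
        rw [Finset.prod_range_succ, Finset.prod_range_zero]
        norm_num [Nat.factorial]
      rw [h1]; push_cast
      constructor <;> nlinarith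
    | succ m hm ih =>
      have hm' : (1:ℝ) ≤ m := by exact_mod_cast hm
      have hrec : gl (α-1) (m+1) = ((m:ℝ) - (α-1)) / ((m:ℝ)+1) * gl (α-1) m :=
        gl_succ (α-1) m
      have hc0 : 0 ≤ ((m:ℝ) - (α-1)) / ((m:ℝ)+1) :=
        div_nonneg (by linarith) (by linarith)
      constructor
      · rw [hrec]
        exact mul_nonpos_of_nonneg_of_nonpos hc0 ih.1
      · push_cast
        rw [hrec]
        have heq : ((m:ℝ)+1) * (((m:ℝ) - (α-1)) / ((m:ℝ)+1) * gl (α-1) m)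
            = ((m:ℝ) - (α-1)) * gl (α-1) m := by
          field_simp
        rw [heq]
        have hstep : (m:ℝ) * gl (α-1) m ≤ ((m:ℝ) - (α-1)) * gl (α-1) m :=
          mul_le_mul_of_nonpos_right (by linarith) ih.1
        linarith [ih.2]
  -- partial sums of the tail
  have hps : ∀ J : ℕ, ∑ j ∈ Finset.range J, gl α (n+1+j)
      = gl (α-1) (n+J) - gl (α-1) n := by
    intro J
    induction J with
    | zero => simp
    | succ J ih =>
      rw [Finset.sum_range_succ, ih]
      have hP := gl_pascal α (n+J)
      have e : n + 1 + J = n + J + 1 := by omega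
      have e2 : n + (J + 1) = n + J + 1 := by omega
      rw [e, e2]
      linarith
  -- limit of gl (α-1) m
  have hlim : Filter.Tendsto (fun m : ℕ => gl (α-1) m) Filter.atTop (nhds 0) := by
    have hlow : Filter.Tendsto (fun m : ℕ => (-(α-1))/(m:ℝ)) Filter.atTop (nhds 0) :=
      tendsto_const_div_atTop_nhds_zero_nat _
    apply tendsto_of_tendsto_of_tendsto_of_le_of_le' hlow tendsto_const_nhds
    · filter_upwards [Filter.eventually_ge_atTop 1] with m hm
      have hm' : (0:ℝ) < m := by exact_mod_cast hm
      rw [div_le_iff₀ hm']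
      have := (hSb m hm).2
      linarith [this]
    · filter_upwards [Filter.eventually_ge_atTop 1] with m hm
      exact (hSb m hm).1
  -- conclude HasSum
  rw [sum_gl]
  have hnonneg : ∀ j : ℕ, 0 ≤ gl α (n+1+j) := fun j => (glpos _ (by omega)).le
  rw [hasSum_iff_tendsto_nat_of_nonneg hnonneg]
  have hcomp : Filter.Tendsto (fun J : ℕ => n + J) Filter.atTop Filter.atTop :=
    Filter.tendsto_atTop_mono (fun J => Nat.le_add_left J n) Filter.tendsto_id
  have h1 : Filter.Tendsto (fun J : ℕ => gl (α-1) (n+J)) Filter.atTop (nhds 0) :=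
    hlim.comp hcomp
  have h2 := h1.sub_const (gl (α-1) n)
  rw [zero_sub] at h2
  refine h2.congr' ?_
  filter_upwards with J
  rw [hps J]
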